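/- Let (G,P) be a quasi-lattice ordered group and let μ be a finitely additive probability measure on (P,B_P) such that the family (μ(pP))_{p∈P} is summable. For p ∈ P set w_p = inf{μ(Ω) : Ω ∈ B_P, p ∈ Ω}. Then the family (w_p)_{p∈P} is summable and ∑_{p∈P} w_p ≥ 1. -/
import Mathlib


/-- The order on `G` induced by the submonoid `P`: `g ≤ h` iff `g⁻¹ * h ∈ P`. -/
def QLe {G : Type*} [Group G] (P : Submonoid G) (g h : G) : Prop := g⁻¹ * h ∈ P

/-- `u` is the least upper bound of `g` and `h` with respect to `QLe P`. -/
def QLub {G : Type*} [Group G] (P : Submonoid G) (g h u : G) : Prop :=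
  QLe P g u ∧ QLe P h u ∧ ∀ v, QLe P g v → QLe P h v → QLe P u v

/-- `(G, P)` is a quasi-lattice ordered group. -/
structure QuasiLatticeOrdered {G : Type*} [Group G] (P : Submonoid G) : Prop where
  gen : Subgroup.closure (P : Set G) = ⊤
  cap : ∀ g ∈ P, g⁻¹ ∈ P → g = 1
  lub : ∀ g h : G, (∃ u, QLe P g u ∧ QLe P h u) → ∃ u, QLub P g h u

/-- Membership in the algebra `B_P` of subsets of `P` generated by the sets
`pP = {x | p⁻¹ x ∈ P}`, `p ∈ P`: the smallest collection of subsets containing the sets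
`pP` and closed under complements in `P`, finite unions and finite intersections. -/
inductive MemBP {G : Type*} [Group G] (P : Submonoid G) : Set G → Prop
  | basic (p : G) (hp : p ∈ P) : MemBP P {x | QLe P p x}
  | compl (Ω : Set G) : MemBP P Ω → MemBP P ((P : Set G) \ Ω)
  | union (Ω₁ Ω₂ : Set G) : MemBP P Ω₁ → MemBP P Ω₂ → MemBP P (Ω₁ ∪ Ω₂)
  | inter (Ω₁ Ω₂ : Set G) : MemBP P Ω₁ → MemBP P Ω₂ → MemBP P (Ω₁ ∩ Ω₂)

/-- For a finite set `J ⊆ P \ {e}`, `Ω_J = ⋂_{q ∈ J} (P \ qP)`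
(with the convention `Ω_∅ = P`). -/
def OmegaJ {G : Type*} [Group G] (P : Submonoid G) (J : Finset G) : Set G :=
  (P : Set G) ∩ ⋂ q ∈ J, {x | QLe P q x}ᶜ

/-- `w_p = inf { μ(Ω) : Ω ∈ B_P, p ∈ Ω }`. -/
noncomputable def wt {G : Type*} [Group G] (P : Submonoid G) (μ : Set G → ℝ) (p : G) : ℝ :=
  sInf {r : ℝ | ∃ Ω : Set G, MemBP P Ω ∧ p ∈ Ω ∧ μ Ω = r}

section Aux
variable {G : Type*} [Group G] (P : Submonoid G)

theorem qle_refl (p : G) : QLe P p p := by simp [QLe, one_mem]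

theorem qle_trans {p q r : G} (h1 : QLe P p q) (h2 : QLe P q r) : QLe P p r := by
  have := mul_mem h1 h2
  simpa [mul_assoc, QLe] using this

theorem mem_of_qle {p x : G} (hp : p ∈ P) (h : QLe P p x) : x ∈ P := by
  have := mul_mem hp h
  simpa [QLe] using this

theorem memBP_subset {Ω : Set G} (h : MemBP P Ω) : Ω ⊆ (P : Set G) := by
  induction h with
  | basic p hp => intro x hx; exact mem_of_qle P hp hx
  | compl Ω h ih => exact Set.diff_subset
  | union Ω₁ Ω₂ h1 h2 ih1 ih2 => exact Set.union_subset ih1 ih2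
  | inter Ω₁ Ω₂ h1 h2 ih1 ih2 => exact Set.inter_subset_left.trans ih1

theorem memBP_P : MemBP P (P : Set G) := by
  have h : {x | QLe P (1 : G) x} = (P : Set G) := by ext x; simp [QLe]
  rw [← h]; exact MemBP.basic 1 (one_mem P)

theorem memBP_empty : MemBP P (∅ : Set G) := by
  have := MemBP.compl _ (memBP_P P)
  simpa [Set.diff_self] using this

theorem memBP_diff {Ω₁ Ω₂ : Set G} (h1 : MemBP P Ω₁) (h2 : MemBP P Ω₂) :
    MemBP P (Ω₁ \ Ω₂) := by
  have heq : Ω₁ \ Ω₂ = Ω₁ ∩ ((P : Set G) \ Ω₂) := by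
    ext x
    exact ⟨fun hx => ⟨hx.1, memBP_subset P h1 hx.1, hx.2⟩, fun hx => ⟨hx.1, hx.2.2⟩⟩
  rw [heq]; exact MemBP.inter _ _ h1 (MemBP.compl _ h2)

end Aux

section Mu
variable {G : Type*} [Group G] (P : Submonoid G) (μ : Set G → ℝ)
variable (hpos : ∀ Ω : Set G, MemBP P Ω → 0 ≤ μ Ω)
variable (hadd : ∀ Ω₁ Ω₂ : Set G, MemBP P Ω₁ → MemBP P Ω₂ → Disjoint Ω₁ Ω₂ →
      μ (Ω₁ ∪ Ω₂) = μ Ω₁ + μ Ω₂)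

include hadd

theorem mu_empty : μ ∅ = 0 := by
  have h := hadd ∅ ∅ (memBP_empty P) (memBP_empty P) (by simp)
  simp at h
  linarith

include hpos

theorem mu_mono {Ω₁ Ω₂ : Set G} (h1 : MemBP P Ω₁) (h2 : MemBP P Ω₂) (h : Ω₁ ⊆ Ω₂) :
    μ Ω₁ ≤ μ Ω₂ := by
  have hd : MemBP P (Ω₂ \ Ω₁) := memBP_diff P h2 h1
  have he := hadd Ω₁ (Ω₂ \ Ω₁) h1 hd Set.disjoint_sdiff_right
  rw [Set.union_diff_cancel h] at he
  have := hpos _ hd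
  linarith

theorem mu_diff {Ω₁ Ω₂ : Set G} (h1 : MemBP P Ω₁) (h2 : MemBP P Ω₂) (h : Ω₂ ⊆ Ω₁) :
    μ (Ω₁ \ Ω₂) = μ Ω₁ - μ Ω₂ := by
  have hd : MemBP P (Ω₁ \ Ω₂) := memBP_diff P h1 h2
  have he := hadd Ω₂ (Ω₁ \ Ω₂) h2 hd Set.disjoint_sdiff_right
  rw [Set.union_diff_cancel h] at he
  linarith

theorem mu_union_le {Ω₁ Ω₂ : Set G} (h1 : MemBP P Ω₁) (h2 : MemBP P Ω₂) :
    μ (Ω₁ ∪ Ω₂) ≤ μ Ω₁ + μ Ω₂ := by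
  have hd : MemBP P (Ω₂ \ Ω₁) := memBP_diff P h2 h1
  have he := hadd Ω₁ (Ω₂ \ Ω₁) h1 hd Set.disjoint_sdiff_right
  rw [Set.union_diff_self] at he
  have hm : μ (Ω₂ \ Ω₁) ≤ μ Ω₂ := mu_mono P μ hpos hadd hd h2 Set.diff_subset
  linarith

theorem mu_biUnion (t : Finset G) (ht : ∀ q ∈ t, q ∈ P) :
    MemBP P (⋃ q ∈ t, {x | QLe P q x}) ∧
      μ (⋃ q ∈ t, {x | QLe P q x}) ≤ ∑ q ∈ t, μ {x | QLe P q x} := by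
  classical
  induction t using Finset.induction with
  | empty => simpa using ⟨memBP_empty P, le_of_eq (mu_empty P μ hadd)⟩
  | @insert a s ha ih =>
    have hs : ∀ q ∈ s, q ∈ P := fun q hq => ht q (Finset.mem_insert_of_mem hq)
    obtain ⟨ihm, ihle⟩ := ih hs
    have hma : MemBP P {x | QLe P a x} := MemBP.basic a (ht a (Finset.mem_insert_self a s))
    have heq : (⋃ q ∈ insert a s, {x | QLe P q x}) =
        {x | QLe P a x} ∪ ⋃ q ∈ s, {x | QLe P q x} := by
      simp [Finset.set_biUnion_insert]
    rw [heq, Finset.sum_insert ha]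
    refine ⟨MemBP.union _ _ hma ihm, ?_⟩
    have := mu_union_le P μ hpos hadd hma ihm
    linarith

end Mu

section Cell
variable {G : Type*} [Group G] (P : Submonoid G)

def cellSet (K : Finset G) (c : G → Prop) : Set G :=
  (P : Set G) ∩ {x | ∀ q ∈ K, (QLe P q x ↔ c q)}

theorem cellSet_subset (K : Finset G) (c : G → Prop) : cellSet P K c ⊆ (P : Set G) :=
  Set.inter_subset_left

theorem memBP_cellSet (K : Finset G) (c : G → Prop) (hK : ∀ q ∈ K, q ∈ P) :
    MemBP P (cellSet P K c) := by
  classical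
  induction K using Finset.induction with
  | empty =>
    have : cellSet P ∅ c = (P : Set G) := by ext x; simp [cellSet]
    rw [this]; exact memBP_P P
  | @insert a s ha ih =>
    have hs : ∀ q ∈ s, q ∈ P := fun q hq => hK q (Finset.mem_insert_of_mem hq)
    by_cases h : c a
    · have heq : cellSet P (insert a s) c = cellSet P s c ∩ {x | QLe P a x} := by
        ext x
        simp only [cellSet, Set.mem_inter_iff, Set.mem_setOf_eq, Finset.mem_insert]
        constructor
        · rintro ⟨hxP, hx⟩
          exact ⟨⟨hxP, fun q hq => hx q (Or.inr hq)⟩, (hx a (Or.inl rfl)).mpr h⟩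
        · rintro ⟨⟨hxP, hx⟩, hax⟩
          refine ⟨hxP, fun q hq => ?_⟩
          rcases hq with rfl | hq
          · exact ⟨fun _ => h, fun _ => hax⟩
          · exact hx q hq
      rw [heq]
      exact MemBP.inter _ _ (ih hs) (MemBP.basic a (hK a (Finset.mem_insert_self a s)))
    · have heq : cellSet P (insert a s) c = cellSet P s c \ {x | QLe P a x} := by
        ext x
        simp only [cellSet, Set.mem_inter_iff, Set.mem_setOf_eq, Finset.mem_insert,
          Set.mem_diff]
        constructor
        · rintro ⟨hxP, hx⟩
          exact ⟨⟨hxP, fun q hq => hx q (Or.inr hq)⟩,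
            fun hax => h ((hx a (Or.inl rfl)).mp hax)⟩
        · rintro ⟨⟨hxP, hx⟩, hax⟩
          refine ⟨hxP, fun q hq => ?_⟩
          rcases hq with rfl | hq
          · exact ⟨fun hh => absurd hh hax, fun hh => absurd hh h⟩
          · exact hx q hq
      rw [heq]
      exact memBP_diff P (ih hs) (MemBP.basic a (hK a (Finset.mem_insert_self a s)))

theorem cellSet_mono {K J : Finset G} (h : K ⊆ J) (c : G → Prop) :
    cellSet P J c ⊆ cellSet P K c :=
  fun _ hx => ⟨hx.1, fun q hq => hx.2 q (h hq)⟩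

theorem exists_atom_finset {Ω : Set G} (h : MemBP P Ω) :
    ∃ K : Finset G, (∀ q ∈ K, q ∈ P) ∧
      ∀ p ∈ Ω, ∀ x ∈ (P : Set G), (∀ q ∈ K, (QLe P q x ↔ QLe P q p)) → x ∈ Ω := by
  classical
  induction h with
  | basic p hp =>
    refine ⟨{p}, by simpa using hp, ?_⟩
    intro p' hp' x _ hiff
    exact (hiff p (Finset.mem_singleton_self p)).mpr hp'
  | compl Ω h ih =>
    obtain ⟨K, hK, hatom⟩ := ih
    refine ⟨K, hK, ?_⟩
    intro p hp x hx hiff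
    refine ⟨hx, fun hxΩ => hp.2 ?_⟩
    exact hatom x hxΩ p hp.1 (fun q hq => (hiff q hq).symm)
  | union Ω₁ Ω₂ h1 h2 ih1 ih2 =>
    obtain ⟨K₁, hK₁, hatom₁⟩ := ih1
    obtain ⟨K₂, hK₂, hatom₂⟩ := ih2
    refine ⟨K₁ ∪ K₂, fun q hq => ?_, ?_⟩
    · rcases Finset.mem_union.mp hq with hq | hq
      · exact hK₁ q hq
      · exact hK₂ q hq
    · intro p hp x hx hiff
      rcases hp with hp | hp
      · exact Or.inl (hatom₁ p hp x hx fun q hq => hiff q (Finset.mem_union_left _ hq))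
      · exact Or.inr (hatom₂ p hp x hx fun q hq => hiff q (Finset.mem_union_right _ hq))
  | inter Ω₁ Ω₂ h1 h2 ih1 ih2 =>
    obtain ⟨K₁, hK₁, hatom₁⟩ := ih1
    obtain ⟨K₂, hK₂, hatom₂⟩ := ih2
    refine ⟨K₁ ∪ K₂, fun q hq => ?_, ?_⟩
    · rcases Finset.mem_union.mp hq with hq | hq
      · exact hK₁ q hq
      · exact hK₂ q hq
    · intro p hp x hx hiff
      exact ⟨hatom₁ p hp.1 x hx fun q hq => hiff q (Finset.mem_union_left _ hq),
        hatom₂ p hp.2 x hx fun q hq => hiff q (Finset.mem_union_right _ hq)⟩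

theorem exists_sup (hQL : QuasiLatticeOrdered P) (S : Finset G) (hS : ∀ q ∈ S, q ∈ P)
    (x : G) (hx : x ∈ P) (hub : ∀ q ∈ S, QLe P q x) :
    ∃ p, p ∈ P ∧ (∀ q ∈ S, QLe P q p) ∧
      ∀ v, v ∈ P → (∀ q ∈ S, QLe P q v) → QLe P p v := by
  classical
  revert hS hub
  induction S using Finset.induction with
  | empty =>
    intro _ _
    refine ⟨1, one_mem P, by simp, fun v hv _ => ?_⟩
    simpa [QLe] using hv
  | @insert a s ha ih =>
    intro hS hub
    obtain ⟨p', hp'P, hp'ub, hp'least⟩ := ih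
      (fun q hq => hS q (Finset.mem_insert_of_mem hq))
      (fun q hq => hub q (Finset.mem_insert_of_mem hq))
    have hax : QLe P a x := hub a (Finset.mem_insert_self a s)
    have hp'x : QLe P p' x := hp'least x hx (fun q hq => hub q (Finset.mem_insert_of_mem hq))
    obtain ⟨u, hau, hp'u, hleast⟩ := hQL.lub a p' ⟨x, hax, hp'x⟩
    have haP : a ∈ P := hS a (Finset.mem_insert_self a s)
    refine ⟨u, mem_of_qle P haP hau, ?_, ?_⟩
    · intro q hq
      rcases Finset.mem_insert.mp hq with rfl | hq
      · exact hau
      · exact qle_trans P (hp'ub q hq) hp'u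
    · intro v hv hvub
      exact hleast v (hvub a (Finset.mem_insert_self a s))
        (hp'least v hv (fun q hq => hvub q (Finset.mem_insert_of_mem hq)))

end Cell

section Partition
variable {G : Type*} [Group G] (P : Submonoid G) (μ : Set G → ℝ)
variable (hpos : ∀ Ω : Set G, MemBP P Ω → 0 ≤ μ Ω)
variable (hadd : ∀ Ω₁ Ω₂ : Set G, MemBP P Ω₁ → MemBP P Ω₂ → Disjoint Ω₁ Ω₂ →
      μ (Ω₁ ∪ Ω₂) = μ Ω₁ + μ Ω₂)

include hpos hadd

theorem partition_sum (t : Finset G) (ht : ∀ q ∈ t, q ∈ P)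
    (V : Set G) (hV : MemBP P V) :
    ∑ S ∈ t.powerset, μ (cellSet P t (· ∈ S) ∩ V) = μ V := by
  classical
  revert ht
  induction t using Finset.induction with
  | empty =>
    intro _
    rw [Finset.powerset_empty, Finset.sum_singleton]
    congr 1
    have h0 : cellSet P ∅ (· ∈ (∅ : Finset G)) = (P : Set G) := by
      ext x; simp [cellSet]
    rw [h0]
    exact Set.inter_eq_self_of_subset_right (memBP_subset P hV)
  | @insert a t ha ih =>
    intro ht
    have htt : ∀ q ∈ t, q ∈ P := fun q hq => ht q (Finset.mem_insert_of_mem hq)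
    have haP : a ∈ P := ht a (Finset.mem_insert_self a t)
    rw [Finset.sum_powerset_insert ha, ← ih htt, ← Finset.sum_add_distrib]
    refine Finset.sum_congr rfl ?_
    intro S hS
    have hSt : S ⊆ t := Finset.mem_powerset.mp hS
    have haS : a ∉ S := fun h => ha (hSt h)
    set X := cellSet P t (· ∈ S) ∩ V with hX
    have hXmem : MemBP P X :=
      MemBP.inter _ _ (memBP_cellSet P t _ htt) hV
    have hE1 : cellSet P (insert a t) (· ∈ S) ∩ V = X \ {x | QLe P a x} := by
      ext x
      simp only [cellSet, hX, Set.mem_inter_iff, Set.mem_setOf_eq, Set.mem_diff,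
        Finset.mem_insert]
      constructor
      · rintro ⟨⟨hxP, hx⟩, hxV⟩
        refine ⟨⟨⟨hxP, fun q hq => hx q (Or.inr hq)⟩, hxV⟩, ?_⟩
        intro hax
        exact haS ((hx a (Or.inl rfl)).mp hax)
      · rintro ⟨⟨⟨hxP, hx⟩, hxV⟩, hax⟩
        refine ⟨⟨hxP, fun q hq => ?_⟩, hxV⟩
        rcases hq with rfl | hq
        · exact ⟨fun h => absurd h hax, fun h => absurd h haS⟩
        · exact hx q hq
    have hE2 : cellSet P (insert a t) (· ∈ insert a S) ∩ V = X ∩ {x | QLe P a x} := by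
      ext x
      simp only [cellSet, hX, Set.mem_inter_iff, Set.mem_setOf_eq, Finset.mem_insert]
      constructor
      · rintro ⟨⟨hxP, hx⟩, hxV⟩
        refine ⟨⟨⟨hxP, fun q hq => ?_⟩, hxV⟩, (hx a (Or.inl rfl)).mpr (Or.inl rfl)⟩
        have h := hx q (Or.inr hq)
        have hqa : q ≠ a := fun h' => ha (h' ▸ hq)
        constructor
        · intro hqx
          rcases h.mp hqx with h' | h'
          · exact absurd h' hqa
          · exact h'
        · intro hqS
          exact h.mpr (Or.inr hqS)
      · rintro ⟨⟨⟨hxP, hx⟩, hxV⟩, hax⟩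
        refine ⟨⟨hxP, fun q hq => ?_⟩, hxV⟩
        rcases hq with rfl | hq
        · exact ⟨fun _ => Or.inl rfl, fun _ => hax⟩
        · have h := hx q hq
          have hqa : q ≠ a := fun h' => ha (h' ▸ hq)
          constructor
          · intro hqx
            exact Or.inr (h.mp hqx)
          · rintro (h' | h')
            · exact absurd h' hqa
            · exact h.mpr h'
    rw [hE1, hE2]
    have hma : MemBP P {x | QLe P a x} := MemBP.basic a haP
    have hd := hadd (X ∩ {x | QLe P a x}) (X \ {x | QLe P a x})
      (MemBP.inter _ _ hXmem hma) (memBP_diff P hXmem hma)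
      (Set.disjoint_sdiff_right.mono_left Set.inter_subset_right)
    rw [Set.inter_union_diff] at hd
    linarith

end Partition


/-- If `μ` is a finitely additive probability measure on `(P, B_P)` with `(μ(pP))_{p ∈ P}`
summable, then `(w_p)_{p ∈ P}` is summable and `∑_{p ∈ P} w_p ≥ 1`. -/
theorem stmt6 {G : Type*} [Group G] (P : Submonoid G) (hQL : QuasiLatticeOrdered P)
    (μ : Set G → ℝ)
    (hpos : ∀ Ω : Set G, MemBP P Ω → 0 ≤ μ Ω)
    (hone : μ (P : Set G) = 1)
    (hadd : ∀ Ω₁ Ω₂ : Set G, MemBP P Ω₁ → MemBP P Ω₂ → Disjoint Ω₁ Ω₂ →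
      μ (Ω₁ ∪ Ω₂) = μ Ω₁ + μ Ω₂)
    (hsum : Summable fun p : P => μ {x | QLe P (p : G) x}) :
    (Summable fun p : P => wt P μ (p : G)) ∧ 1 ≤ ∑' p : P, wt P μ (p : G) := by
  classical
  have hlb : ∀ p : G, ∀ r ∈ {r : ℝ | ∃ Ω : Set G, MemBP P Ω ∧ p ∈ Ω ∧ μ Ω = r},
      (0 : ℝ) ≤ r := by
    rintro p r ⟨Ω, hΩ, -, rfl⟩
    exact hpos Ω hΩ
  have hw0 : ∀ p : G, 0 ≤ wt P μ p := fun p => Real.sInf_nonneg (hlb p)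
  have hwle : ∀ p : G, p ∈ P → wt P μ p ≤ μ {x | QLe P p x} := by
    intro p hp
    exact csInf_le ⟨0, hlb p⟩ ⟨{x | QLe P p x}, MemBP.basic p hp, qle_refl P p, rfl⟩
  have hsumw : Summable fun p : ↥P => wt P μ ↑p :=
    Summable.of_nonneg_of_le (fun p => hw0 ↑p) (fun p => hwle ↑p p.2) hsum
  refine ⟨hsumw, le_of_forall_pos_le_add ?_⟩
  intro ε hε
  set δ : ℝ := ε / 2 with hδdef
  have hδ : 0 < δ := by positivity
  obtain ⟨F₀, hF₀⟩ := summable_iff_vanishing.mp hsum (Set.Ioo (-δ) δ)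
    (Ioo_mem_nhds (by linarith) hδ)
  set F : Finset G := F₀.image Subtype.val with hFdef
  have hF : ∀ q ∈ F, q ∈ P := by
    intro q hq
    obtain ⟨p, -, rfl⟩ := Finset.mem_image.mp hq
    exact p.2
  set 𝒮 : Finset (Finset G) :=
    F.powerset.filter (fun S => (cellSet P F (· ∈ S)).Nonempty) with h𝒮def
  set δ' : ℝ := δ / (𝒮.card + 1) with hδ'def
  have hδ' : 0 < δ' := by positivity
  have hchoice : ∀ S ∈ 𝒮, ∃ (p : G) (K : Finset G), p ∈ P ∧ p ∈ cellSet P F (· ∈ S) ∧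
      (∀ x ∈ cellSet P F (· ∈ S), QLe P p x) ∧ (∀ q ∈ K, q ∈ P) ∧
      ∀ J' : Finset G, K ⊆ J' → (∀ q ∈ J', q ∈ P) →
        μ (cellSet P J' (fun q => QLe P q p)) < wt P μ p + δ' := by
    intro S hS
    obtain ⟨hSpow, hSne⟩ := Finset.mem_filter.mp hS
    have hSF : S ⊆ F := Finset.mem_powerset.mp hSpow
    obtain ⟨x, hx⟩ := hSne
    have hxP : x ∈ P := hx.1
    have hub : ∀ q ∈ S, QLe P q x := fun q hq => (hx.2 q (hSF hq)).mpr hq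
    obtain ⟨p, hpP, hpub, hpleast⟩ :=
      exists_sup P hQL S (fun q hq => hF q (hSF hq)) x hxP hub
    have hpcell : p ∈ cellSet P F (· ∈ S) := by
      refine ⟨hpP, fun q hqF => ⟨fun hqp => ?_, fun hqS => hpub q hqS⟩⟩
      exact (hx.2 q hqF).mp (qle_trans P hqp (hpleast x hxP hub))
    have hplcell : ∀ y ∈ cellSet P F (· ∈ S), QLe P p y := by
      intro y hy
      exact hpleast y hy.1 (fun q hq => (hy.2 q (hSF hq)).mpr hq)
    have hne : {r : ℝ | ∃ Ω : Set G, MemBP P Ω ∧ p ∈ Ω ∧ μ Ω = r}.Nonempty :=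
      ⟨μ (P : Set G), P, memBP_P P, hpP, rfl⟩
    obtain ⟨r, ⟨Ω, hΩ, hpΩ, rfl⟩, hrlt⟩ := Real.lt_sInf_add_pos hne hδ'
    obtain ⟨K, hK, hatom⟩ := exists_atom_finset P hΩ
    refine ⟨p, K, hpP, hpcell, hplcell, hK, ?_⟩
    intro J' hKJ' hJ'
    have hsub : cellSet P J' (fun q => QLe P q p) ⊆ Ω := by
      intro y hy
      exact hatom p hpΩ y hy.1 (fun q hq => hy.2 q (hKJ' hq))
    have hmo := mu_mono P μ hpos hadd (memBP_cellSet P J' _ hJ') hΩ hsub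
    have hwt : wt P μ p = sInf {r : ℝ | ∃ Ω : Set G, MemBP P Ω ∧ p ∈ Ω ∧ μ Ω = r} := rfl
    rw [hwt]
    linarith
  choose pf Kf hp1 hp2 hp3 hp4 hp5 using hchoice
  set J : Finset G := F ∪ 𝒮.attach.biUnion (fun S => Kf S.1 S.2) with hJdef
  have hJ : ∀ q ∈ J, q ∈ P := by
    intro q hq
    rcases Finset.mem_union.mp hq with hq | hq
    · exact hF q hq
    · obtain ⟨S, -, hqK⟩ := Finset.mem_biUnion.mp hq
      exact hp4 S.1 S.2 q hqK
  have hJF : ∀ q ∈ J \ F, q ∈ P := fun q hq => hJ q (Finset.mem_sdiff.mp hq).1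
  set U : Set G := ⋃ q ∈ (J \ F), {x | QLe P q x} with hUdef
  obtain ⟨hUmem, hUle⟩ := mu_biUnion P μ hpos hadd (J \ F) hJF
  have htail : ∑ q ∈ J \ F, μ {x | QLe P q x} < δ := by
    set t : Finset ↥P := (J \ F).attach.image (fun q => (⟨q.1, hJF q.1 q.2⟩ : ↥P)) with htdef
    have hinj : ∀ x ∈ (J \ F).attach, ∀ y ∈ (J \ F).attach,
        (⟨x.1, hJF x.1 x.2⟩ : ↥P) = ⟨y.1, hJF y.1 y.2⟩ → x = y := by
      intro x _ y _ h
      exact Subtype.ext (Subtype.mk_eq_mk.mp h)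
    have hsum_eq : ∑ i ∈ t, μ {x | QLe P (↑i) x} = ∑ q ∈ J \ F, μ {x | QLe P q x} := by
      rw [htdef, Finset.sum_image hinj]
      exact Finset.sum_attach (J \ F) (fun q => μ {x | QLe P q x})
    have hdisj : Disjoint t F₀ := by
      rw [Finset.disjoint_left]
      intro i hi hiF₀
      obtain ⟨q, -, rfl⟩ := Finset.mem_image.mp hi
      have hqF : (q.1 : G) ∈ F := Finset.mem_image.mpr ⟨_, hiF₀, rfl⟩
      exact (Finset.mem_sdiff.mp q.2).2 hqF
    have hlt := (hF₀ t hdisj).2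
    rw [hsum_eq] at hlt
    exact hlt
  have hUP : U ⊆ (P : Set G) := memBP_subset P hUmem
  set V : Set G := (P : Set G) \ U with hVdef
  have hVmem : MemBP P V := memBP_diff P (memBP_P P) hUmem
  have hμV : μ V = 1 - μ U := by
    rw [hVdef, mu_diff P μ hpos hadd (memBP_P P) hUmem hUP, hone]
  have hμU : μ U < δ := lt_of_le_of_lt hUle htail
  have hpart : ∑ S ∈ F.powerset, μ (cellSet P F (· ∈ S) ∩ V) = μ V :=
    partition_sum P μ hpos hadd F hF V hVmem
  have hpart2 : ∑ S ∈ 𝒮, μ (cellSet P F (· ∈ S) ∩ V) = μ V := by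
    rw [← hpart]
    apply Finset.sum_subset (Finset.filter_subset _ _)
    intro S hS hS𝒮
    have hne : ¬ (cellSet P F (· ∈ S)).Nonempty := by
      intro h
      exact hS𝒮 (Finset.mem_filter.mpr ⟨hS, h⟩)
    rw [Set.not_nonempty_iff_eq_empty.mp hne, Set.empty_inter]
    exact mu_empty P μ hadd
  have hcell : ∀ S (hS : S ∈ 𝒮),
      μ (cellSet P F (· ∈ S) ∩ V) < wt P μ (pf S hS) + δ' := by
    intro S hS
    have hKJ : Kf S hS ⊆ J := fun q hq =>
      Finset.mem_union_right _ (Finset.mem_biUnion.mpr ⟨⟨S, hS⟩, Finset.mem_attach _ _, hq⟩)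
    have hsub : cellSet P F (· ∈ S) ∩ V ⊆ cellSet P J (fun q => QLe P q (pf S hS)) := by
      rintro x ⟨hxc, hxV⟩
      refine ⟨hxc.1, fun q hq => ?_⟩
      by_cases hqF : q ∈ F
      · exact (hxc.2 q hqF).trans ((hp2 S hS).2 q hqF).symm
      · have hqJF : q ∈ J \ F := Finset.mem_sdiff.mpr ⟨hq, hqF⟩
        have hnx : ¬ QLe P q x := by
          intro h
          exact hxV.2 (Set.mem_biUnion hqJF h)
        have hnp : ¬ QLe P q (pf S hS) := by
          intro h
          exact hnx (qle_trans P h (hp3 S hS x hxc))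
        exact iff_of_false hnx hnp
    exact lt_of_le_of_lt
      (mu_mono P μ hpos hadd (MemBP.inter _ _ (memBP_cellSet P F _ hF) hVmem)
        (memBP_cellSet P J _ hJ) hsub)
      (hp5 S hS J hKJ hJ)
  have hattach : ∑ S ∈ 𝒮, μ (cellSet P F (· ∈ S) ∩ V)
      = ∑ S ∈ 𝒮.attach, μ (cellSet P F (· ∈ S.1) ∩ V) := (Finset.sum_attach _ _).symm
  set T : Finset ↥P := 𝒮.attach.image (fun S => (⟨pf S.1 S.2, hp1 S.1 S.2⟩ : ↥P)) with hTdef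
  have hinj2 : ∀ x ∈ 𝒮.attach, ∀ y ∈ 𝒮.attach,
      (⟨pf x.1 x.2, hp1 x.1 x.2⟩ : ↥P) = ⟨pf y.1 y.2, hp1 y.1 y.2⟩ → x = y := by
    intro x _ y _ h
    have hpe : pf x.1 x.2 = pf y.1 y.2 := Subtype.mk_eq_mk.mp h
    have hx2 := hp2 x.1 x.2
    have hy2 := hp2 y.1 y.2
    rw [hpe] at hx2
    apply Subtype.ext
    apply Finset.ext
    intro q
    constructor
    · intro hq
      have hqF : q ∈ F :=
        Finset.mem_powerset.mp (Finset.mem_filter.mp x.2).1 hq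
      exact (hy2.2 q hqF).mp ((hx2.2 q hqF).mpr hq)
    · intro hq
      have hqF : q ∈ F :=
        Finset.mem_powerset.mp (Finset.mem_filter.mp y.2).1 hq
      exact (hx2.2 q hqF).mp ((hy2.2 q hqF).mpr hq)
  have hTsum : ∑ i ∈ T, wt P μ ↑i = ∑ S ∈ 𝒮.attach, wt P μ (pf S.1 S.2) := by
    rw [hTdef, Finset.sum_image hinj2]
  have hfinal : μ V ≤ ∑ i ∈ T, wt P μ ↑i + 𝒮.card * δ' := by
    rw [← hpart2, hattach, hTsum]
    calc ∑ S ∈ 𝒮.attach, μ (cellSet P F (· ∈ S.1) ∩ V)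
        ≤ ∑ S ∈ 𝒮.attach, (wt P μ (pf S.1 S.2) + δ') :=
          Finset.sum_le_sum (fun S _ => le_of_lt (hcell S.1 S.2))
      _ = ∑ S ∈ 𝒮.attach, wt P μ (pf S.1 S.2) + 𝒮.card * δ' := by
          rw [Finset.sum_add_distrib, Finset.sum_const, Finset.card_attach, nsmul_eq_mul]
  have hcardδ : (𝒮.card : ℝ) * δ' ≤ δ := by
    have hpos1 : (0 : ℝ) < (𝒮.card : ℝ) + 1 :=
      add_pos_of_nonneg_of_pos (Nat.cast_nonneg _) one_pos
    have h2 : ((𝒮.card : ℝ) + 1) * δ' = δ := by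
      rw [hδ'def, mul_comm, div_mul_cancel₀ _ (ne_of_gt hpos1)]
    have h3 : ((𝒮.card : ℝ) + 1) * δ' = (𝒮.card : ℝ) * δ' + δ' := by ring
    linarith
  have hT_le := Summable.sum_le_tsum T (fun i _ => hw0 ↑i) hsumw
  linarith
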